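/- Let k ≥ 1 and h ≥ 1 be integers and K, δ > 0 reals. Let G be a graph with maximum degree at most Kδ, let x, y be vertices of G, and let i, j be nonnegative integers with i + j < 2k. If the pair (x,y) is (i,j)-rich (with parameters k, h, K, δ), then there exist h pairwise internally vertex-disjoint paths of length 2k between x and y in G. -/

import Mathlib

open SimpleGraph

variable {V : Type*} [Fintype V] [DecidableEq V]

/-- The restriction of `p : ℕ → V` to `[0, ℓ]` is a path in `G`: consecutive vertices are
adjacent and all vertices `p 0, …, p ℓ` are distinct. -/
def PathSeq (G : SimpleGraph V) (ℓ : ℕ) (p : ℕ → V) : Prop :=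
  (∀ i, i < ℓ → G.Adj (p i) (p (i + 1))) ∧
  ∀ i j, i < j → j ≤ ℓ → p i ≠ p j

/-- `p` is padded beyond index `ℓ`; used so that each finite sequence corresponds to a
unique function `ℕ → V` when counting. -/
def PadSeq (ℓ : ℕ) (p : ℕ → V) : Prop := ∀ i, ℓ ≤ i → p i = p ℓ

/-- `f(ℓ, L) = L^(5^ℓ)`. -/
noncomputable def fBound (ℓ : ℕ) (L : ℝ) : ℝ := L ^ (5 ^ ℓ)

/-- The recursive notion of an `L`-good path of length `ℓ` (as a sequence `p 0, …, p ℓ`):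
`p` is a path, every proper subpath is `L`-good, and the number of `L`-admissible paths of
length `ℓ` from `p 0` to `p ℓ` is at most `f(ℓ, L)`. -/
def Good (G : SimpleGraph V) (L : ℝ) (ℓ : ℕ) (p : ℕ → V) : Prop :=
  (PathSeq G ℓ p ∧
    ∀ i j, i < j → j ≤ ℓ → ¬(i = 0 ∧ j = ℓ) → Good G L (j - i) (fun a => p (i + a))) ∧
  (Set.ncard {q : ℕ → V | q 0 = p 0 ∧ q ℓ = p ℓ ∧ PadSeq ℓ q ∧ PathSeq G ℓ q ∧
      ∀ i j, i < j → j ≤ ℓ → ¬(i = 0 ∧ j = ℓ) → Good G L (j - i) (fun a => q (i + a))} : ℝ)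
    ≤ fBound ℓ L
termination_by ℓ
decreasing_by all_goals omega

/-- `L`-admissible: a path all of whose proper subpaths are `L`-good. -/
def Admissible (G : SimpleGraph V) (L : ℝ) (ℓ : ℕ) (p : ℕ → V) : Prop :=
  PathSeq G ℓ p ∧
    ∀ i j, i < j → j ≤ ℓ → ¬(i = 0 ∧ j = ℓ) → Good G L (j - i) (fun a => p (i + a))

/-- There exist `N` pairwise internally vertex-disjoint paths of length `m` from `x` to `y`. -/
def ManyDisjointPaths (G : SimpleGraph V) (m : ℕ) (x y : V) (N : ℕ) : Prop :=
  ∃ P : Fin N → (ℕ → V),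
    (∀ a, PathSeq G m (P a) ∧ P a 0 = x ∧ P a m = y) ∧
    (∀ a b, a ≠ b → ∃ i, i ≤ m ∧ P a i ≠ P b i) ∧
    ∀ a b, a ≠ b → ∀ i j, 0 < i → i < m → 0 < j → j < m → P a i ≠ P b j

/-- A pair `(x, y)` of distinct vertices is `(i,j)`-rich (with parameters `k`, `h`, `K`, `δ`). -/
def Rich (G : SimpleGraph V) (k h : ℕ) (K δ : ℝ) (i j : ℕ) (x y : V) : Prop :=
  x ≠ y ∧
  ((2 * (i + j) * h * (2 * k + 1) + 2 * (i + 1) * j : ℕ) : ℝ) *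
      (K * δ) ^ ((i : ℤ) + (j : ℤ) - 1) <
    (Set.ncard {PQ : (ℕ → V) × (ℕ → V) |
      PathSeq G i PQ.1 ∧ PQ.1 0 = x ∧ PadSeq i PQ.1 ∧
      PathSeq G j PQ.2 ∧ PQ.2 0 = y ∧ PadSeq j PQ.2 ∧
      ManyDisjointPaths G (2 * k - i - j) (PQ.1 i) (PQ.2 j) ((h + 2) * (2 * k + 1) + 1)} : ℝ)

/-- `(x, y)` is an `(ℓ, L)`-bad pair: there is an `L`-admissible but not `L`-good path of
length `ℓ` from `x` to `y`. -/
def Bad (G : SimpleGraph V) (L : ℝ) (ℓ : ℕ) (x y : V) : Prop :=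
  ∃ p : ℕ → V, p 0 = x ∧ p ℓ = y ∧ Admissible G L ℓ p ∧ ¬ Good G L ℓ p

/-- `G` contains the `(s-1)`-subdivision of the multigraph on `Fin t` with multiplicity
function `m` as a subgraph: each parallel edge between `a < b` is replaced by a path of
length `s`, these paths being pairwise internally vertex-disjoint, with internal vertices
distinct from all branch vertices. -/
def ContainsMultiSubdiv (G : SimpleGraph V) (t : ℕ) (m : Fin t → Fin t → ℕ) (s : ℕ) : Prop :=
  ∃ (φ : Fin t → V) (π : (a : Fin t) → (b : Fin t) → Fin (m a b) → (ℕ → V)),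
    Function.Injective φ ∧
    (∀ a b, a < b → ∀ c, PathSeq G s (π a b c) ∧ π a b c 0 = φ a ∧ π a b c s = φ b) ∧
    (∀ a b, a < b → ∀ c, ∀ i, 0 < i → i < s → ∀ d, π a b c i ≠ φ d) ∧
    (∀ a b, a < b → ∀ a' b', a' < b' → ∀ (c : Fin (m a b)) (c' : Fin (m a' b')),
      (a, b, (c : ℕ)) ≠ (a', b', (c' : ℕ)) →
      ∀ i i', 0 < i → i < s → 0 < i' → i' < s → π a b c i ≠ π a' b' c' i')

/-- The number of vertices of `H = F^{2k-1}` where `F` is the multigraph on `Fin t` with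
multiplicity function `m`: the `t` branch vertices plus `2k - 1` internal vertices for each
edge (counted with multiplicity). -/
def nH (t k : ℕ) (m : Fin t → Fin t → ℕ) : ℕ :=
  t + (2 * k - 1) * ∑ p : Fin t × Fin t, if p.1 < p.2 then m p.1 p.2 else 0

/-- The minimum degree of `G`. -/
noncomputable def minDeg (G : SimpleGraph V) : ℕ :=
  sInf {d | ∃ v, (G.neighborSet v).ncard = d}

/-- The maximum degree of `G`. -/
noncomputable def maxDeg (G : SimpleGraph V) : ℕ :=
  sSup {d | ∃ v, (G.neighborSet v).ncard = d}

/-- Adjacency in the auxiliary graph `𝒢_ℓ(v)`: the `2k+1` vertices `u 0 = v, u 1, …, u k,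
u' 1, …, u' k` are all distinct and there exist `0 ≤ i, j ≤ k-1` such that the pair
`(u ℓ, u' ℓ)` is `(i,j)`-rich (symmetrised so that this defines a graph). -/
def AuxAdj (G : SimpleGraph V) (k h : ℕ) (K δ : ℝ) (ℓ : Fin (k + 1))
    (u u' : Fin (k + 1) → V) : Prop :=
  Function.Injective u ∧ Function.Injective u' ∧
  (∀ a b : Fin (k + 1), a ≠ 0 → b ≠ 0 → u a ≠ u' b) ∧
  ∃ i j : ℕ, i < k ∧ j < k ∧
    (Rich G k h K δ i j (u ℓ) (u' ℓ) ∨ Rich G k h K δ i j (u' ℓ) (u ℓ))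

/-- `r` satisfies the `k`-colour Ramsey property for `t`: every `k`-colouring of the edges of
the complete graph on `r` vertices contains a monochromatic complete graph on `t` vertices. -/
def RamseyProp (k t r : ℕ) : Prop :=
  ∀ χ : Fin r → Fin r → Fin k, (∀ a b, χ a b = χ b a) →
    ∃ (col : Fin k) (s : Finset (Fin r)), s.card = t ∧
      ∀ a ∈ s, ∀ b ∈ s, a ≠ b → χ a b = col

set_option linter.unusedSectionVars false

namespace Aux

lemma padseq_ext {ℓ : ℕ} {p q : ℕ → V} (hp : PadSeq ℓ p) (hq : PadSeq ℓ q)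
    (h : ∀ a ≤ ℓ, p a = q a) : p = q := by
  funext a
  rcases le_or_gt a ℓ with h1 | h1
  · exact h a h1
  · rw [hp a h1.le, hq a h1.le, h ℓ le_rfl]

lemma padseq_finite (ℓ : ℕ) {S : Set (ℕ → V)} (h : ∀ p ∈ S, PadSeq ℓ p) : S.Finite := by
  apply Set.Finite.of_finite_image (f := fun p => (fun a : Fin (ℓ + 1) => p a))
  · exact Set.toFinite _
  · intro p hp q hq hpq
    refine padseq_ext (h p hp) (h q hq) fun a ha => ?_
    have := congrFun hpq ⟨a, by omega⟩
    simpa using this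

lemma ncard_eq_sum_fibers {α β : Type*} [DecidableEq β] {S : Set α} (hS : S.Finite)
    (f : α → β) (B : Finset β) (hmap : ∀ a ∈ S, f a ∈ B) :
    S.ncard = ∑ b ∈ B, ({a ∈ S | f a = b}).ncard := by
  classical
  rw [Set.ncard_eq_toFinset_card S hS]
  rw [Finset.card_eq_sum_card_fiberwise (f := f) (t := B)
    (fun a ha => hmap a (hS.mem_toFinset.mp ha))]
  refine Finset.sum_congr rfl fun b _ => ?_
  rw [← Set.ncard_coe_finset]
  congr 1
  ext a
  simp [Set.Finite.mem_toFinset, and_comm]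

lemma ncard_biUnion_le {α β : Type*} (s : Finset β) (f : β → Set α) :
    (⋃ b ∈ s, f b).ncard ≤ ∑ b ∈ s, (f b).ncard := by
  classical
  induction s using Finset.induction_on with
  | empty => simp
  | insert _ _ hb ih =>
    rename_i a s
    rw [Finset.set_biUnion_insert, Finset.sum_insert hb]
    exact le_trans (Set.ncard_union_le _ _) (by omega)

lemma ncard_prod_le {α β : Type*} {t : Set (α × β)} {A : Set α} {B : Set β}
    (hA : A.Finite) (hB : B.Finite) (h : t ⊆ A ×ˢ B) :
    t.ncard ≤ A.ncard * B.ncard := by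
  classical
  have h2 : t ⊆ ↑(hA.toFinset ×ˢ hB.toFinset) := by
    intro z hz
    have := h hz
    simp only [Finset.coe_product, Set.Finite.coe_toFinset]
    exact this
  calc t.ncard ≤ (↑(hA.toFinset ×ˢ hB.toFinset) : Set (α × β)).ncard :=
        Set.ncard_le_ncard h2 (Set.toFinite _)
    _ = (hA.toFinset ×ˢ hB.toFinset).card := Set.ncard_coe_finset _
    _ = hA.toFinset.card * hB.toFinset.card := Finset.card_product _ _
    _ = A.ncard * B.ncard := by rw [Set.ncard_eq_toFinset_card A hA,
        Set.ncard_eq_toFinset_card B hB]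

/-! ## Counting paths -/

def PSet (G : SimpleGraph V) (ℓ : ℕ) (x : V) : Set (ℕ → V) :=
  {p | p 0 = x ∧ PadSeq ℓ p ∧ PathSeq G ℓ p}

lemma PSet_finite (G : SimpleGraph V) (ℓ : ℕ) (x : V) : (PSet G ℓ x).Finite :=
  padseq_finite ℓ fun _ hp => hp.2.1

variable {G : SimpleGraph V} {D : ℝ}

lemma walk_count (hD : 0 ≤ D) (hdeg : ∀ v : V, ((G.neighborSet v).ncard : ℝ) ≤ D) :
    ∀ ℓ : ℕ, ∀ x : V, ((PSet G ℓ x).ncard : ℝ) ≤ D ^ ℓ := by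
  intro ℓ
  induction ℓ with
  | zero =>
    intro x
    have : PSet G 0 x = {fun _ => x} := by
      ext p
      constructor
      · rintro ⟨h0, hpad, _⟩
        funext a
        rw [hpad a (Nat.zero_le a), h0]
      · rintro rfl
        exact ⟨rfl, fun i _ => rfl, ⟨fun i hi => by omega, fun i j hij hj => by omega⟩⟩
    simp [this]
  | succ ℓ ih =>
    intro x
    classical
    set NB : Finset V := (G.neighborSet x).toFinite.toFinset with hNB
    have hmap : ∀ p ∈ PSet G (ℓ + 1) x, p 1 ∈ NB := by
      rintro p ⟨h0, hpad, hadj, hdist⟩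
      have := hadj 0 (by omega)
      rw [h0] at this
      simp [hNB, Set.Finite.mem_toFinset, SimpleGraph.mem_neighborSet]
      exact this
    have hfib : ∀ v : V, (({p ∈ PSet G (ℓ+1) x | p 1 = v}).ncard : ℝ) ≤ D ^ ℓ := by
      intro v
      refine le_trans ?_ (ih v)
      have hinj : Set.InjOn (fun p => (fun a => p (1 + a) : ℕ → V))
          {p ∈ PSet G (ℓ+1) x | p 1 = v} := by
        rintro p ⟨⟨hp0, hppad, _⟩, _⟩ q ⟨⟨hq0, hqpad, _⟩, _⟩ hpq
        refine padseq_ext hppad hqpad fun a ha => ?_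
        show p a = q a
        cases a with
        | zero => rw [hp0, hq0]
        | succ a =>
          have := congrFun hpq a
          simp only at this
          rw [Nat.add_comm 1 a] at this
          exact this
      have hsub : ∀ p ∈ {p ∈ PSet G (ℓ+1) x | p 1 = v},
          (fun a => p (1 + a) : ℕ → V) ∈ PSet G ℓ v := by
        rintro p ⟨⟨hp0, hppad, hadj, hdist⟩, hp1⟩
        refine ⟨hp1, fun a ha => ?_, fun a ha => ?_, fun a b hab hb => ?_⟩
        · show p (1 + a) = p (1 + ℓ)
          rw [hppad (1 + a) (by omega), hppad (1 + ℓ) (by omega)]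
        · show G.Adj (p (1 + a)) (p (1 + (a + 1)))
          have := hadj (1 + a) (by omega)
          have h : 1 + (a + 1) = 1 + a + 1 := by omega
          rw [h]
          exact this
        · show p (1 + a) ≠ p (1 + b)
          exact hdist (1 + a) (1 + b) (by omega) (by omega)
      exact_mod_cast Set.ncard_le_ncard_of_injOn _ hsub hinj (PSet_finite G ℓ v)
    have hcount := ncard_eq_sum_fibers (PSet_finite G (ℓ+1) x) (fun p => p 1) NB hmap
    calc ((PSet G (ℓ+1) x).ncard : ℝ)
        = ∑ v ∈ NB, (({p ∈ PSet G (ℓ+1) x | p 1 = v}).ncard : ℝ) := by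
          rw [hcount]; push_cast; rfl
      _ ≤ ∑ v ∈ NB, D ^ ℓ := Finset.sum_le_sum fun v _ => hfib v
      _ = (NB.card : ℝ) * D ^ ℓ := by rw [Finset.sum_const, nsmul_eq_mul]
      _ ≤ D * D ^ ℓ := by
          refine mul_le_mul_of_nonneg_right ?_ (pow_nonneg hD ℓ)
          rw [hNB, ← Set.ncard_eq_toFinset_card _ (G.neighborSet x).toFinite]
          exact hdeg x
      _ = D ^ (ℓ + 1) := (pow_succ' D ℓ).symm

lemma endpoint_count (hD : 0 ≤ D) (hdeg : ∀ v : V, ((G.neighborSet v).ncard : ℝ) ≤ D)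
    {ℓ : ℕ} (hℓ : 1 ≤ ℓ) (v w : V) :
    (({p ∈ PSet G ℓ v | p ℓ = w}).ncard : ℝ) ≤ D ^ (ℓ - 1) := by
  refine le_trans ?_ (walk_count hD hdeg (ℓ - 1) v)
  have key : ∀ p ∈ {p ∈ PSet G ℓ v | p ℓ = w},
      (fun a => p (min a (ℓ - 1)) : ℕ → V) ∈ PSet G (ℓ - 1) v := by
    rintro p ⟨⟨hp0, hppad, hadj, hdist⟩, hpw⟩
    refine ⟨by simpa using hp0, fun a ha => ?_, fun a ha => ?_, fun a b hab hb => ?_⟩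
    · show p (min a (ℓ - 1)) = p (min (ℓ - 1) (ℓ - 1))
      rw [min_eq_right ha, min_self]
    · show G.Adj (p (min a (ℓ - 1))) (p (min (a + 1) (ℓ - 1)))
      have h1 : min a (ℓ - 1) = a := min_eq_left (by omega)
      have h2 : min (a + 1) (ℓ - 1) = a + 1 := min_eq_left (by omega)
      rw [h1, h2]
      exact hadj a (by omega)
    · show p (min a (ℓ - 1)) ≠ p (min b (ℓ - 1))
      rw [min_eq_left (by omega : a ≤ ℓ - 1), min_eq_left (by omega : b ≤ ℓ - 1)]
      exact hdist a b hab (by omega)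
  have hinj : Set.InjOn (fun p => (fun a => p (min a (ℓ - 1)) : ℕ → V))
      {p ∈ PSet G ℓ v | p ℓ = w} := by
    rintro p ⟨⟨hp0, hppad, _⟩, hpw⟩ q ⟨⟨hq0, hqpad, _⟩, hqw⟩ hpq
    refine padseq_ext hppad hqpad fun a ha => ?_
    rcases Nat.lt_or_ge a ℓ with h1 | h1
    · have := congrFun hpq a
      simp only at this
      rw [min_eq_left (by omega : a ≤ ℓ - 1)] at this
      exact this
    · have : a = ℓ := by omega
      rw [this, hpw, hqw]
  exact_mod_cast Set.ncard_le_ncard_of_injOn _ key hinj (PSet_finite G (ℓ-1) v)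

lemma middle_count (hD : 0 ≤ D) (hdeg : ∀ v : V, ((G.neighborSet v).ncard : ℝ) ≤ D)
    {ℓ t : ℕ} (ht1 : 1 ≤ t) (ht2 : t ≤ ℓ) (x v : V) :
    (({p ∈ PSet G ℓ x | p t = v}).ncard : ℝ) ≤ D ^ (ℓ - 1) := by
  classical
  -- map p to (reversed prefix, suffix)
  set Φ : (ℕ → V) → (ℕ → V) × (ℕ → V) :=
    fun p => ((fun a => p (t - a)), (fun a => p (min (t + a) ℓ))) with hΦ
  have hsub : ∀ p ∈ {p ∈ PSet G ℓ x | p t = v},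
      Φ p ∈ ({r ∈ PSet G t v | r t = x} ×ˢ PSet G (ℓ - t) v) := by
    rintro p ⟨⟨hp0, hppad, hadj, hdist⟩, hpv⟩
    refine ⟨⟨⟨show p (t - 0) = v by simpa using hpv, fun a ha => ?_, fun a ha => ?_,
      fun a b hab hb => ?_⟩, show p (t - t) = x by simpa using hp0⟩,
      ⟨show p (min (t + 0) ℓ) = v by
        rw [min_eq_left (by omega)]; simpa using hpv, fun a ha => ?_, fun a ha => ?_,
        fun a b hab hb => ?_⟩⟩
    · show p (t - a) = p (t - t)
      rw [Nat.sub_eq_zero_of_le ha, Nat.sub_self]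
    · show G.Adj (p (t - a)) (p (t - (a + 1)))
      have h1 : t - a = (t - (a+1)) + 1 := by omega
      have := hadj (t - (a + 1)) (by omega)
      rw [h1]
      exact this.symm
    · show p (t - a) ≠ p (t - b)
      intro hcon
      exact hdist (t - b) (t - a) (by omega) (by omega) hcon.symm
    · show p (min (t + a) ℓ) = p (min (t + (ℓ - t)) ℓ)
      rw [min_eq_right (by omega), min_eq_right (by omega)]
    · show G.Adj (p (min (t + a) ℓ)) (p (min (t + (a + 1)) ℓ))
      have h1 : min (t + a) ℓ = t + a := min_eq_left (by omega)
      have h2 : min (t + (a+1)) ℓ = t + a + 1 := by rw [min_eq_left (by omega)]; ring_nf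
      rw [h1, h2]
      exact hadj (t + a) (by omega)
    · show p (min (t + a) ℓ) ≠ p (min (t + b) ℓ)
      rw [min_eq_left (by omega), min_eq_left (by omega)]
      exact hdist (t + a) (t + b) (by omega) (by omega)
  have hinj : Set.InjOn Φ {p ∈ PSet G ℓ x | p t = v} := by
    rintro p ⟨⟨hp0, hppad, _⟩, _⟩ q ⟨⟨hq0, hqpad, _⟩, _⟩ hpq
    have h1 := congrArg Prod.fst hpq
    have h2 := congrArg Prod.snd hpq
    refine padseq_ext hppad hqpad fun a ha => ?_
    rcases Nat.lt_or_ge a t with hc | hc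
    · have := congrFun h1 (t - a)
      simp only [hΦ] at this
      rw [Nat.sub_sub_self (by omega : a ≤ t)] at this
      exact this
    · have := congrFun h2 (a - t)
      simp only [hΦ] at this
      rw [min_eq_left (by omega : t + (a - t) ≤ ℓ), Nat.add_sub_cancel' hc] at this
      exact this
  have hfin1 : ({r ∈ PSet G t v | r t = x}).Finite :=
    padseq_finite t (fun r hr => hr.1.2.1)
  have hmain := Set.ncard_le_ncard_of_injOn Φ hsub hinj
    (hfin1.prod (PSet_finite G (ℓ - t) v))
  calc (({p ∈ PSet G ℓ x | p t = v}).ncard : ℝ)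
      ≤ (({r ∈ PSet G t v | r t = x} ×ˢ PSet G (ℓ - t) v).ncard : ℝ) := by exact_mod_cast hmain
    _ ≤ (({r ∈ PSet G t v | r t = x}).ncard : ℝ) * ((PSet G (ℓ - t) v).ncard : ℝ) := by
        exact_mod_cast ncard_prod_le hfin1 (PSet_finite G (ℓ - t) v) subset_rfl
    _ ≤ D ^ (t - 1) * D ^ (ℓ - t) := by
        exact mul_le_mul (endpoint_count hD hdeg ht1 v x) (walk_count hD hdeg _ v)
          (Nat.cast_nonneg _) (pow_nonneg hD _)
    _ = D ^ (ℓ - 1) := by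
        rw [← pow_add]
        have h : t - 1 + (ℓ - t) = ℓ - 1 := by
          clear hmain hfin1 hinj hsub hΦ
          clear Φ
          omega
        rw [h]

end Aux


namespace Aux

lemma exists_good_pair {G : SimpleGraph V} {k h : ℕ} {K δ : ℝ}
    (hk : 1 ≤ k) (hh : 1 ≤ h) (hD : 0 ≤ K * δ)
    (hdeg : ∀ v : V, ((G.neighborSet v).ncard : ℝ) ≤ K * δ)
    {x y : V} {i j : ℕ} (hij : i + j < 2 * k)
    (F : Finset V) (hF : F.card ≤ (h - 1) * (2 * k - 1))
    (hrich : Rich G k h K δ i j x y) :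
    ∃ P Q : ℕ → V, P 0 = x ∧ PadSeq i P ∧ PathSeq G i P ∧
      Q 0 = y ∧ PadSeq j Q ∧ PathSeq G j Q ∧
      ManyDisjointPaths G (2 * k - i - j) (P i) (Q j) ((h + 2) * (2 * k + 1) + 1) ∧
      (∀ s t, s ≤ i → t ≤ j → P s ≠ Q t) ∧
      (∀ t, 1 ≤ t → t ≤ i → P t ∉ F) ∧
      (∀ t, 1 ≤ t → t ≤ j → Q t ∉ F) := by
  classical
  have hbudget : i * (F.card + 1) + j * (F.card + 1) + i * j ≤
      2 * (i + j) * h * (2 * k + 1) + 2 * (i + 1) * j := by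
    have hb : F.card + 1 ≤ 2 * h * (2 * k + 1) := by
      have h2 : (h - 1) * (2 * k - 1) ≤ h * (2 * k + 1) :=
        Nat.mul_le_mul (by omega) (by omega)
      have h3 : 1 * 1 ≤ h * (2 * k + 1) := Nat.mul_le_mul hh (by omega)
      have h4 : 2 * h * (2 * k + 1) = h * (2 * k + 1) + h * (2 * k + 1) := by ring
      omega
    have e1 : i * (2 * h * (2 * k + 1)) + j * (2 * h * (2 * k + 1)) =
        2 * (i + j) * h * (2 * k + 1) := by ring
    have e2 : i * j ≤ 2 * (i + 1) * j := Nat.mul_le_mul (by omega) le_rfl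
    have e3 : i * (F.card + 1) ≤ i * (2 * h * (2 * k + 1)) :=
      Nat.mul_le_mul_left _ hb
    have e4 : j * (F.card + 1) ≤ j * (2 * h * (2 * k + 1)) :=
      Nat.mul_le_mul_left _ hb
    omega
  set D : ℝ := K * δ with hDdef
  obtain ⟨hxy, hcount⟩ := hrich
  set S : Set ((ℕ → V) × (ℕ → V)) := {PQ : (ℕ → V) × (ℕ → V) |
      PathSeq G i PQ.1 ∧ PQ.1 0 = x ∧ PadSeq i PQ.1 ∧
      PathSeq G j PQ.2 ∧ PQ.2 0 = y ∧ PadSeq j PQ.2 ∧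
      ManyDisjointPaths G (2 * k - i - j) (PQ.1 i) (PQ.2 j) ((h + 2) * (2 * k + 1) + 1)}
    with hSdef
  have hSsub : S ⊆ PSet G i x ×ˢ PSet G j y := by
    rintro ⟨P, Q⟩ ⟨h1, h2, h3, h4, h5, h6, h7⟩
    exact ⟨⟨h2, h3, h1⟩, ⟨h5, h6, h4⟩⟩
  have hSfin : S.Finite := ((PSet_finite G i x).prod (PSet_finite G j y)).subset hSsub
  -- the three families of bad events
  set U1 : Set ((ℕ → V) × (ℕ → V)) :=
    ⋃ q ∈ (Finset.Icc 1 i) ×ˢ (insert y F), {PQ ∈ S | PQ.1 q.1 = q.2} with hU1def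
  set U2 : Set ((ℕ → V) × (ℕ → V)) :=
    ⋃ q ∈ (Finset.Icc 1 j) ×ˢ (insert x F), {PQ ∈ S | PQ.2 q.1 = q.2} with hU2def
  set U3 : Set ((ℕ → V) × (ℕ → V)) :=
    ⋃ q ∈ (Finset.Icc 1 i) ×ˢ (Finset.Icc 1 j), {PQ ∈ S | PQ.1 q.1 = PQ.2 q.2} with hU3def
  have key : ∃ PQ ∈ S, PQ ∉ U1 ∪ U2 ∪ U3 := by
    rcases Nat.eq_zero_or_pos (i + j) with hij0 | hij1
    · -- trivial case: no events at all
      have hi0 : i = 0 := by omega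
      have hj0 : j = 0 := by omega
      have hC0 : ((2 * (i + j) * h * (2 * k + 1) + 2 * (i + 1) * j : ℕ) : ℝ) = 0 := by
        rw [hi0, hj0]; norm_num
      rw [hC0, zero_mul] at hcount
      have hne : S.Nonempty := by
        apply Set.nonempty_of_ncard_ne_zero
        intro hzero
        rw [hzero] at hcount
        exact absurd hcount (by norm_num)
      obtain ⟨PQ, hPQ⟩ := hne
      refine ⟨PQ, hPQ, ?_⟩
      intro hmem
      simp only [hU1def, hU2def, hU3def, Set.mem_union, Set.mem_iUnion] at hmem
      rcases hmem with (⟨q, hq, _⟩ | ⟨q, hq, _⟩) | ⟨q, hq, _⟩ <;>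
        · rw [Finset.mem_product, Finset.mem_Icc] at hq
          omega
    · -- counting case
      by_contra hcon
      push_neg at hcon
      have hScover : S ⊆ U1 ∪ U2 ∪ U3 := fun PQ hPQ => hcon PQ hPQ
      -- bounds on each event
      have hE1 : ∀ q ∈ (Finset.Icc 1 i) ×ˢ (insert y F),
          (({PQ ∈ S | PQ.1 q.1 = q.2}).ncard : ℝ) ≤ D ^ (i + j - 1) := by
        rintro ⟨t, v⟩ hq
        rw [Finset.mem_product, Finset.mem_Icc] at hq
        have hsub : {PQ ∈ S | PQ.1 t = v} ⊆ {p ∈ PSet G i x | p t = v} ×ˢ PSet G j y := by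
          rintro ⟨P, Q⟩ ⟨hPQ, hPt⟩
          have := hSsub hPQ
          exact ⟨⟨this.1, hPt⟩, this.2⟩
        calc (({PQ ∈ S | PQ.1 t = v}).ncard : ℝ)
            ≤ (({p ∈ PSet G i x | p t = v}).ncard : ℝ) * ((PSet G j y).ncard : ℝ) := by
              exact_mod_cast ncard_prod_le (padseq_finite i fun p hp => hp.1.2.1)
                (PSet_finite G j y) hsub
          _ ≤ D ^ (i - 1) * D ^ j :=
              mul_le_mul (middle_count hD hdeg hq.1.1 hq.1.2 x v)
                (walk_count hD hdeg j y) (Nat.cast_nonneg _) (pow_nonneg hD _)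
          _ = D ^ (i + j - 1) := by
              rw [← pow_add]
              have : i - 1 + j = i + j - 1 := by omega
              rw [this]
      have hE2 : ∀ q ∈ (Finset.Icc 1 j) ×ˢ (insert x F),
          (({PQ ∈ S | PQ.2 q.1 = q.2}).ncard : ℝ) ≤ D ^ (i + j - 1) := by
        rintro ⟨t, v⟩ hq
        rw [Finset.mem_product, Finset.mem_Icc] at hq
        have hsub : {PQ ∈ S | PQ.2 t = v} ⊆ PSet G i x ×ˢ {p ∈ PSet G j y | p t = v} := by
          rintro ⟨P, Q⟩ ⟨hPQ, hQt⟩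
          have := hSsub hPQ
          exact ⟨this.1, ⟨this.2, hQt⟩⟩
        calc (({PQ ∈ S | PQ.2 t = v}).ncard : ℝ)
            ≤ ((PSet G i x).ncard : ℝ) * (({p ∈ PSet G j y | p t = v}).ncard : ℝ) := by
              exact_mod_cast ncard_prod_le (PSet_finite G i x)
                (padseq_finite j fun p hp => hp.1.2.1) hsub
          _ ≤ D ^ i * D ^ (j - 1) :=
              mul_le_mul (walk_count hD hdeg i x)
                (middle_count hD hdeg hq.1.1 hq.1.2 y v) (Nat.cast_nonneg _) (pow_nonneg hD _)
          _ = D ^ (i + j - 1) := by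
              rw [← pow_add]
              have : i + (j - 1) = i + j - 1 := by omega
              rw [this]
      have hE3 : ∀ q ∈ (Finset.Icc 1 i) ×ˢ (Finset.Icc 1 j),
          (({PQ ∈ S | PQ.1 q.1 = PQ.2 q.2}).ncard : ℝ) ≤ D ^ (i + j - 1) := by
        rintro ⟨s, t⟩ hq
        rw [Finset.mem_product, Finset.mem_Icc, Finset.mem_Icc] at hq
        set E : Set ((ℕ → V) × (ℕ → V)) := {PQ ∈ S | PQ.1 s = PQ.2 t} with hEdef
        have hEfin : E.Finite := hSfin.subset fun PQ hPQ => hPQ.1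
        have hfibs := ncard_eq_sum_fibers hEfin (fun PQ => PQ.1 s) Finset.univ
          (fun _ _ => Finset.mem_univ _)
        have hfib_bound : ∀ v : V, (({PQ ∈ E | PQ.1 s = v}).ncard : ℝ) ≤
            D ^ (i - 1) * (({p ∈ PSet G j y | p t = v}).ncard : ℝ) := by
          intro v
          have hsub : {PQ ∈ E | PQ.1 s = v} ⊆
              {p ∈ PSet G i x | p s = v} ×ˢ {p ∈ PSet G j y | p t = v} := by
            rintro ⟨P, Q⟩ ⟨⟨hPQ, hPs⟩, hPv⟩
            have := hSsub hPQ
            exact ⟨⟨this.1, hPv⟩, ⟨this.2, by rw [← hPs]; exact hPv⟩⟩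
          calc (({PQ ∈ E | PQ.1 s = v}).ncard : ℝ)
              ≤ (({p ∈ PSet G i x | p s = v}).ncard : ℝ) *
                (({p ∈ PSet G j y | p t = v}).ncard : ℝ) := by
                exact_mod_cast ncard_prod_le (padseq_finite i fun p hp => hp.1.2.1)
                  (padseq_finite j fun p hp => hp.1.2.1) hsub
            _ ≤ D ^ (i - 1) * (({p ∈ PSet G j y | p t = v}).ncard : ℝ) :=
                mul_le_mul_of_nonneg_right (middle_count hD hdeg hq.1.1 hq.1.2 x v)
                  (Nat.cast_nonneg _)
        have hsumfib := ncard_eq_sum_fibers (PSet_finite G j y) (fun p => p t) Finset.univ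
          (fun _ _ => Finset.mem_univ _)
        calc ((E.ncard : ℝ))
            = ∑ v ∈ Finset.univ, (({PQ ∈ E | PQ.1 s = v}).ncard : ℝ) := by
              rw [hfibs]; push_cast; rfl
          _ ≤ ∑ v ∈ Finset.univ, D ^ (i - 1) * (({p ∈ PSet G j y | p t = v}).ncard : ℝ) :=
              Finset.sum_le_sum fun v _ => hfib_bound v
          _ = D ^ (i - 1) * ((PSet G j y).ncard : ℝ) := by
              rw [← Finset.mul_sum, hsumfib]
              push_cast
              rfl
          _ ≤ D ^ (i - 1) * D ^ j :=
              mul_le_mul_of_nonneg_left (walk_count hD hdeg j y) (pow_nonneg hD _)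
          _ = D ^ (i + j - 1) := by
              rw [← pow_add]
              have : i - 1 + j = i + j - 1 := by clear hfibs hsumfib hfib_bound; omega
              rw [this]
      -- put the union bound together
      have hDpow : (0:ℝ) ≤ D ^ (i + j - 1) := pow_nonneg hD _
      have hU1b : ((U1.ncard : ℝ)) ≤ (i * (F.card + 1) : ℕ) * D ^ (i + j - 1) := by
        have h1 : (U1.ncard : ℝ) ≤
            ∑ q ∈ (Finset.Icc 1 i) ×ˢ (insert y F), (({PQ ∈ S | PQ.1 q.1 = q.2}).ncard : ℝ) := by
          exact_mod_cast ncard_biUnion_le _ _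
        refine le_trans h1 (le_trans (Finset.sum_le_sum hE1) ?_)
        rw [Finset.sum_const, nsmul_eq_mul, Finset.card_product, Nat.card_Icc]
        have hicard : (i + 1 - 1 : ℕ) = i := by omega
        rw [hicard]
        have hic : ((insert y F).card : ℝ) ≤ (F.card : ℝ) + 1 := by
          exact_mod_cast Finset.card_insert_le y F
        push_cast
        refine mul_le_mul_of_nonneg_right ?_ hDpow
        exact mul_le_mul_of_nonneg_left hic (Nat.cast_nonneg _)
      have hU2b : ((U2.ncard : ℝ)) ≤ (j * (F.card + 1) : ℕ) * D ^ (i + j - 1) := by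
        have h1 : (U2.ncard : ℝ) ≤
            ∑ q ∈ (Finset.Icc 1 j) ×ˢ (insert x F), (({PQ ∈ S | PQ.2 q.1 = q.2}).ncard : ℝ) := by
          exact_mod_cast ncard_biUnion_le _ _
        refine le_trans h1 (le_trans (Finset.sum_le_sum hE2) ?_)
        rw [Finset.sum_const, nsmul_eq_mul, Finset.card_product, Nat.card_Icc]
        have hicard : (j + 1 - 1 : ℕ) = j := by omega
        rw [hicard]
        have hic : ((insert x F).card : ℝ) ≤ (F.card : ℝ) + 1 := by
          exact_mod_cast Finset.card_insert_le x F
        push_cast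
        refine mul_le_mul_of_nonneg_right ?_ hDpow
        exact mul_le_mul_of_nonneg_left hic (Nat.cast_nonneg _)
      have hU3b : ((U3.ncard : ℝ)) ≤ (i * j : ℕ) * D ^ (i + j - 1) := by
        have h1 : (U3.ncard : ℝ) ≤
            ∑ q ∈ (Finset.Icc 1 i) ×ˢ (Finset.Icc 1 j),
              (({PQ ∈ S | PQ.1 q.1 = PQ.2 q.2}).ncard : ℝ) := by
          exact_mod_cast ncard_biUnion_le _ _
        refine le_trans h1 (le_trans (Finset.sum_le_sum hE3) ?_)
        rw [Finset.sum_const, nsmul_eq_mul, Finset.card_product, Nat.card_Icc, Nat.card_Icc]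
        have hicard : (i + 1 - 1 : ℕ) = i := by omega
        have hjcard : (j + 1 - 1 : ℕ) = j := by omega
        rw [hicard, hjcard]
        try push_cast
        try exact le_refl _
      -- union is inside S, so finite
      have hUsub : U1 ∪ U2 ∪ U3 ⊆ S := by
        rw [hU1def, hU2def, hU3def]
        refine Set.union_subset (Set.union_subset ?_ ?_) ?_ <;>
          · intro PQ hPQ
            simp only [Set.mem_iUnion] at hPQ
            obtain ⟨q, _, hq, _⟩ := hPQ
            exact hq
      have hSle : (S.ncard : ℝ) ≤ ((U1 ∪ U2 ∪ U3).ncard : ℝ) := by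
        exact_mod_cast Set.ncard_le_ncard hScover (hSfin.subset hUsub)
      have hUle : ((U1 ∪ U2 ∪ U3).ncard : ℝ) ≤ (U1.ncard : ℝ) + (U2.ncard : ℝ) + (U3.ncard : ℝ) := by
        have t1 : (U1 ∪ U2 ∪ U3).ncard ≤ (U1 ∪ U2).ncard + U3.ncard := Set.ncard_union_le _ _
        have t2 : (U1 ∪ U2).ncard ≤ U1.ncard + U2.ncard := Set.ncard_union_le _ _
        exact_mod_cast le_trans t1 (Nat.add_le_add_right t2 _)
      have hzpow : (K * δ) ^ ((i : ℤ) + (j : ℤ) - 1) = D ^ (i + j - 1) := by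
        have he : ((i : ℤ) + (j : ℤ) - 1) = ((i + j - 1 : ℕ) : ℤ) := by push_cast; omega
        rw [hDdef, he, zpow_natCast]
      rw [hzpow] at hcount
      have hfinal : (S.ncard : ℝ) ≤
          ((2 * (i + j) * h * (2 * k + 1) + 2 * (i + 1) * j : ℕ) : ℝ) * D ^ (i + j - 1) := by
        have hsum : (S.ncard : ℝ) ≤
            ((i * (F.card + 1) + j * (F.card + 1) + i * j : ℕ) : ℝ) * D ^ (i + j - 1) := by
          refine le_trans hSle (le_trans hUle ?_)
          push_cast
          push_cast at hU1b hU2b hU3b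
          linarith
        refine le_trans hsum (mul_le_mul_of_nonneg_right ?_ hDpow)
        exact_mod_cast hbudget
      linarith
  obtain ⟨⟨P, Q⟩, hPQS, hPQnot⟩ := key
  obtain ⟨c1', c2', c3', c4', c5', c6', c7'⟩ := hPQS
  have hPQS' : (P, Q) ∈ S := ⟨c1', c2', c3', c4', c5', c6', c7'⟩
  have c1 : PathSeq G i P := c1'
  have c2 : P 0 = x := c2'
  have c3 : PadSeq i P := c3'
  have c4 : PathSeq G j Q := c4'
  have c5 : Q 0 = y := c5'
  have c6 : PadSeq j Q := c6'
  have c7 : ManyDisjointPaths G (2 * k - i - j) (P i) (Q j) ((h + 2) * (2 * k + 1) + 1) := c7'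
  have hnot1 : ∀ t v, 1 ≤ t → t ≤ i → (v = y ∨ v ∈ F) → P t ≠ v := by
    intro t v ht1 ht2 hv heq
    apply hPQnot
    left; left
    rw [hU1def]
    simp only [Set.mem_iUnion]
    refine ⟨(t, v), ?_, hPQS', heq⟩
    rw [Finset.mem_product, Finset.mem_Icc, Finset.mem_insert]
    exact ⟨⟨ht1, ht2⟩, hv⟩
  have hnot2 : ∀ t v, 1 ≤ t → t ≤ j → (v = x ∨ v ∈ F) → Q t ≠ v := by
    intro t v ht1 ht2 hv heq
    apply hPQnot
    left; right
    rw [hU2def]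
    simp only [Set.mem_iUnion]
    refine ⟨(t, v), ?_, hPQS', heq⟩
    rw [Finset.mem_product, Finset.mem_Icc, Finset.mem_insert]
    exact ⟨⟨ht1, ht2⟩, hv⟩
  have hnot3 : ∀ s t, 1 ≤ s → s ≤ i → 1 ≤ t → t ≤ j → P s ≠ Q t := by
    intro s t hs1 hs2 ht1 ht2 heq
    apply hPQnot
    right
    rw [hU3def]
    simp only [Set.mem_iUnion]
    refine ⟨(s, t), ?_, hPQS', heq⟩
    rw [Finset.mem_product, Finset.mem_Icc, Finset.mem_Icc]
    exact ⟨⟨hs1, hs2⟩, ht1, ht2⟩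
  refine ⟨P, Q, c2, c3, c1, c5, c6, c4, c7, ?_, ?_, ?_⟩
  · intro s t hs ht heq
    rcases Nat.eq_zero_or_pos s with hs0 | hs1 <;> rcases Nat.eq_zero_or_pos t with ht0 | ht1
    · rw [hs0, c2] at heq; rw [ht0, c5] at heq; exact hxy heq
    · rw [hs0, c2] at heq; exact hnot2 t x ht1 ht (Or.inl rfl) heq.symm
    · rw [ht0, c5] at heq; exact hnot1 s y hs1 hs (Or.inl rfl) heq
    · exact hnot3 s t hs1 hs ht1 ht heq
  · intro t ht1 ht2 hmem
    exact hnot1 t (P t) ht1 ht2 (Or.inr hmem) rfl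
  · intro t ht1 ht2 hmem
    exact hnot2 t (Q t) ht1 ht2 (Or.inr hmem) rfl

lemma extend_family {G : SimpleGraph V} {k h : ℕ} {K δ : ℝ}
    (hk : 1 ≤ k) (hh : 1 ≤ h) (hD : 0 ≤ K * δ)
    (hdeg : ∀ v : V, ((G.neighborSet v).ncard : ℝ) ≤ K * δ)
    {x y : V} {i j : ℕ} (hij : i + j < 2 * k)
    (hrich : Rich G k h K δ i j x y)
    {n : ℕ} (hn : n + 1 ≤ h)
    (Pold : Fin n → (ℕ → V))
    (hPold1 : ∀ a, PathSeq G (2 * k) (Pold a) ∧ Pold a 0 = x ∧ Pold a (2 * k) = y)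
    (hPold2 : ∀ a b, a ≠ b → ∃ t, t ≤ 2 * k ∧ Pold a t ≠ Pold b t)
    (hPold3 : ∀ a b, a ≠ b → ∀ s t, 0 < s → s < 2 * k → 0 < t → t < 2 * k →
      Pold a s ≠ Pold b t) :
    ManyDisjointPaths G (2 * k) x y (n + 1) := by
  classical
  -- the set of internal vertices of the old paths
  obtain ⟨F, hFmem, hFcard⟩ : ∃ F : Finset V,
      (∀ v, v ∈ F ↔ ∃ a : Fin n, ∃ t, 0 < t ∧ t < 2 * k ∧ Pold a t = v) ∧
      F.card ≤ (h - 1) * (2 * k - 1) := by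
    refine ⟨Finset.image (fun q : Fin n × ℕ => Pold q.1 q.2)
      (Finset.univ ×ˢ Finset.Ioo 0 (2 * k)), fun v => ?_, ?_⟩
    · simp only [Finset.mem_image, Finset.mem_product, Finset.mem_univ, Finset.mem_Ioo,
        true_and, Prod.exists]
      constructor
      · rintro ⟨a, t, ⟨ht1, ht2⟩, hv⟩
        exact ⟨a, t, ht1, ht2, hv⟩
      · rintro ⟨a, t, ht1, ht2, hv⟩
        exact ⟨a, t, ⟨ht1, ht2⟩, hv⟩
    · calc (Finset.image (fun q : Fin n × ℕ => Pold q.1 q.2)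
          (Finset.univ ×ˢ Finset.Ioo 0 (2 * k))).card
          ≤ (Finset.univ (α := Fin n) ×ˢ Finset.Ioo 0 (2 * k)).card := Finset.card_image_le
        _ = n * (2 * k - 1) := by
            rw [Finset.card_product, Finset.card_univ, Fintype.card_fin, Nat.card_Ioo,
              Nat.sub_zero]
        _ ≤ (h - 1) * (2 * k - 1) := Nat.mul_le_mul_right _ (by omega)
  -- get a good pair
  obtain ⟨P, Q, hP0, hPpad, hPpath, hQ0, hQpad, hQpath, hMDP, hdisjPQ, hPF, hQF⟩ :=
    exists_good_pair hk hh hD hdeg hij F hFcard hrich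
  obtain ⟨m, hmdef⟩ : ∃ m, m = 2 * k - i - j := ⟨_, rfl⟩
  rw [← hmdef] at hMDP
  have hm1 : 1 ≤ m := by omega
  have him : i + m + j = 2 * k := by omega
  obtain ⟨M, hM1, hM2, hM3⟩ := hMDP
  -- the forbidden vertex set
  obtain ⟨B, hFB, hPB, hQB, hBcard⟩ : ∃ B : Finset V,
      (∀ v ∈ F, v ∈ B) ∧ (∀ s, s ≤ i → P s ∈ B) ∧ (∀ t, t ≤ j → Q t ∈ B) ∧
      B.card ≤ h * (2 * k + 1) := by
    refine ⟨F ∪ Finset.image P (Finset.Iic i) ∪ Finset.image Q (Finset.Iic j),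
      fun v hv => by simp [hv], fun s hs => by
        simp only [Finset.mem_union, Finset.mem_image, Finset.mem_Iic]
        exact Or.inl (Or.inr ⟨s, hs, rfl⟩), fun t ht => by
        simp only [Finset.mem_union, Finset.mem_image, Finset.mem_Iic]
        exact Or.inr ⟨t, ht, rfl⟩, ?_⟩
    have hc1 : (F ∪ Finset.image P (Finset.Iic i) ∪ Finset.image Q (Finset.Iic j)).card ≤
        F.card + (Finset.image P (Finset.Iic i)).card + (Finset.image Q (Finset.Iic j)).card :=
      le_trans (Finset.card_union_le _ _) (Nat.add_le_add_right (Finset.card_union_le _ _) _)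
    have hc2 : (Finset.image P (Finset.Iic i)).card ≤ i + 1 :=
      le_trans Finset.card_image_le (by rw [Nat.card_Iic])
    have hc3 : (Finset.image Q (Finset.Iic j)).card ≤ j + 1 :=
      le_trans Finset.card_image_le (by rw [Nat.card_Iic])
    have hc4 : (h - 1) * (2 * k - 1) + (2 * k + 1) ≤ h * (2 * k + 1) := by
      have e1 : (h - 1) * (2 * k - 1) ≤ (h - 1) * (2 * k + 1) :=
        Nat.mul_le_mul_left _ (by omega)
      have e2 : (h - 1 + 1) * (2 * k + 1) = (h - 1) * (2 * k + 1) + (2 * k + 1) := by ring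
      have e3 : h - 1 + 1 = h := by omega
      rw [e3] at e2
      omega
    omega
  -- choose a middle path avoiding B
  have hNb : h * (2 * k + 1) < (h + 2) * (2 * k + 1) + 1 := by
    have : (h + 2) * (2 * k + 1) = h * (2 * k + 1) + 2 * (2 * k + 1) := by ring
    omega
  have hfree : ∃ a : Fin ((h + 2) * (2 * k + 1) + 1), ∀ r, 0 < r → r < m → M a r ∉ B := by
    by_contra hcon
    push_neg at hcon
    choose r hr1 hr2 hr3 using hcon
    have hinj : Function.Injective (fun a => M a (r a)) := by
      intro a b hab
      by_contra hne
      exact hM3 a b hne (r a) (r b) (hr1 a) (hr2 a) (hr1 b) (hr2 b) hab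
    have hcard := Finset.card_le_card_of_injOn (s := Finset.univ) (t := B)
      (fun a => M a (r a)) (fun a _ => hr3 a) (hinj.injOn)
    rw [Finset.card_univ, Fintype.card_fin] at hcard
    omega
  obtain ⟨a0, hfree⟩ := hfree
  obtain ⟨hM0path, hM0s, hM0e⟩ := hM1 a0
  -- the glued path
  obtain ⟨R, hR1, hR2, hR3⟩ : ∃ R : ℕ → V,
      (∀ t, t ≤ i → R t = P t) ∧ (∀ r, r ≤ m → R (i + r) = M a0 r) ∧
      (∀ t, i + m ≤ t → t ≤ 2 * k → R t = Q (2 * k - t)) := by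
    refine ⟨fun t => if t ≤ i then P t else if t ≤ i + m then M a0 (t - i) else Q (2 * k - t),
      fun t ht => by simp [ht], fun r hr => ?_, fun t ht1 ht2 => ?_⟩
    · rcases Nat.eq_zero_or_pos r with hr0 | hr0
      · simp [hr0, hM0s]
      · have h1 : ¬ (i + r ≤ i) := by omega
        have h2 : i + r ≤ i + m := by omega
        simp only [h1, if_false, h2, if_true]
        congr 1
        omega
    · rcases Nat.lt_or_ge (i + m) t with hc | hc
      · have h1 : ¬ (t ≤ i) := by omega
        have h2 : ¬ (t ≤ i + m) := by omega
        simp [h1, h2]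
      · have h1 : ¬ (t ≤ i) := by omega
        have h2 : t ≤ i + m := hc
        simp only [h1, if_false, h2, if_true]
        have e : t - i = m := by omega
        rw [e, hM0e]
        have e2 : 2 * k - t = j := by omega
        rw [e2]
  -- internal vertices of R avoid F
  have hint : ∀ u, 0 < u → u < 2 * k → R u ∉ F := by
    intro u hu1 hu2 hmem
    rcases Nat.lt_or_ge i u with hc1 | hc1
    · rcases Nat.lt_or_ge u (i + m) with hc2 | hc2
      · have : R u = M a0 (u - i) := by
          have := hR2 (u - i) (by omega)
          rw [show i + (u - i) = u from by omega] at this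
          exact this
        rw [this] at hmem
        exact hfree (u - i) (by omega) (by omega) (hFB _ hmem)
      · have : R u = Q (2 * k - u) := hR3 u hc2 (by omega)
        rw [this] at hmem
        exact hQF (2 * k - u) (by omega) (by omega) hmem
    · have : R u = P u := hR1 u hc1
      rw [this] at hmem
      exact hPF u (by omega) (by omega) hmem
  -- R is a path from x to y
  have hRpath : PathSeq G (2 * k) R := by
    constructor
    · intro t ht
      rcases Nat.lt_or_ge t i with hc1 | hc1
      · rw [hR1 t (by omega), hR1 (t + 1) (by omega)]
        exact hPpath.1 t hc1
      · rcases Nat.lt_or_ge t (i + m) with hc2 | hc2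
        · have e1 : R t = M a0 (t - i) := by
            have := hR2 (t - i) (by omega)
            rw [show i + (t - i) = t from by omega] at this
            exact this
          have e2 : R (t + 1) = M a0 (t - i + 1) := by
            have := hR2 (t - i + 1) (by omega)
            rw [show i + (t - i + 1) = t + 1 from by omega] at this
            exact this
          rw [e1, e2]
          exact hM0path.1 (t - i) (by omega)
        · have e1 : R t = Q (2 * k - t) := hR3 t hc2 (by omega)
          have e2 : R (t + 1) = Q (2 * k - (t + 1)) := hR3 (t + 1) (by omega) (by omega)
          rw [e1, e2]
          have hadj := hQpath.1 (2 * k - (t + 1)) (by omega)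
          rw [show 2 * k - (t + 1) + 1 = 2 * k - t from by omega] at hadj
          exact hadj.symm
    · intro u w huw hw
      have hucase : u ≤ i ∨ (i < u ∧ u < i + m) ∨ i + m ≤ u := by omega
      have hwcase : w ≤ i ∨ (i < w ∧ w < i + m) ∨ i + m ≤ w := by omega
      have eM : ∀ v, i < v → v < i + m → R v = M a0 (v - i) := by
        intro v h1 h2
        have := hR2 (v - i) (by omega)
        rw [show i + (v - i) = v from by omega] at this
        exact this
      rcases hucase with hu | hu | hu <;> rcases hwcase with hw' | hw' | hw'
      · rw [hR1 u hu, hR1 w hw']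
        exact hPpath.2 u w huw hw'
      · rw [hR1 u hu, eM w hw'.1 hw'.2]
        intro he
        exact hfree (w - i) (by omega) (by omega) (he ▸ hPB u hu)
      · rw [hR1 u hu, hR3 w hw' hw]
        exact hdisjPQ u (2 * k - w) hu (by omega)
      · omega
      · rw [eM u hu.1 hu.2, eM w hw'.1 hw'.2]
        apply hM0path.2 (u - i) (w - i) (by omega) (by omega)
      · rw [eM u hu.1 hu.2, hR3 w hw' hw]
        intro he
        exact hfree (u - i) (by omega) (by omega) (he ▸ hQB (2 * k - w) (by omega))
      · omega
      · omega
      · rw [hR3 u hu (by omega), hR3 w hw' hw]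
        exact (hQpath.2 (2 * k - w) (2 * k - u) (by omega) (by omega)).symm
  have hR0 : R 0 = x := by rw [hR1 0 (Nat.zero_le _), hP0]
  have hRend : R (2 * k) = y := by
    rw [hR3 (2 * k) (by omega) le_rfl]
    rw [show 2 * k - 2 * k = 0 from by omega, hQ0]
  -- old internal vertices are in F
  have holdF : ∀ (a : Fin n) t, 0 < t → t < 2 * k → Pold a t ∈ F :=
    fun a t h1 h2 => (hFmem _).mpr ⟨a, t, h1, h2, rfl⟩
  -- assemble the new family
  refine ⟨Fin.snoc Pold R, ?_, ?_, ?_⟩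
  · intro a
    induction a using Fin.lastCases with
    | last => simpa [Fin.snoc_last] using ⟨hRpath, hR0, hRend⟩
    | cast a => simpa [Fin.snoc_castSucc] using hPold1 a
  · intro a b hab
    induction a using Fin.lastCases with
    | last =>
      induction b using Fin.lastCases with
      | last => exact absurd rfl hab
      | cast b =>
        refine ⟨1, by omega, ?_⟩
        rw [Fin.snoc_last, Fin.snoc_castSucc]
        intro he
        exact hint 1 (by omega) (by omega) (he ▸ holdF b 1 (by omega) (by omega))
    | cast a =>
      induction b using Fin.lastCases with
      | last =>
        refine ⟨1, by omega, ?_⟩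
        rw [Fin.snoc_last, Fin.snoc_castSucc]
        intro he
        exact hint 1 (by omega) (by omega) (he ▸ holdF a 1 (by omega) (by omega))
      | cast b =>
        have hab' : a ≠ b := fun he => hab (by rw [he])
        obtain ⟨t, ht1, ht2⟩ := hPold2 a b hab'
        refine ⟨t, ht1, ?_⟩
        rw [Fin.snoc_castSucc, Fin.snoc_castSucc]
        exact ht2
  · intro a b hab s t hs1 hs2 ht1 ht2
    induction a using Fin.lastCases with
    | last =>
      induction b using Fin.lastCases with
      | last => exact absurd rfl hab
      | cast b =>
        rw [Fin.snoc_last, Fin.snoc_castSucc]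
        intro he
        exact hint s hs1 hs2 (he ▸ holdF b t ht1 ht2)
    | cast a =>
      induction b using Fin.lastCases with
      | last =>
        rw [Fin.snoc_last, Fin.snoc_castSucc]
        intro he
        exact hint t ht1 ht2 (he.symm ▸ holdF a s hs1 hs2)
      | cast b =>
        rw [Fin.snoc_castSucc, Fin.snoc_castSucc]
        exact hPold3 a b (fun he => hab (by rw [he])) s t hs1 hs2 ht1 ht2

end Aux

/-- **Lemma 4.2.** Let `k, h ≥ 1`, `K, δ > 0`, and let `G` have maximum
degree at most `Kδ`. If `(x, y)` is `(i,j)`-rich (with `i + j < 2k`), then there exist `h`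
pairwise internally vertex-disjoint paths of length `2k` between `x` and `y`. -/
theorem rich_pair_gives_disjoint_paths
    {V : Type*} [Fintype V] [DecidableEq V] (G : SimpleGraph V)
    (k h : ℕ) (hk : 1 ≤ k) (hh : 1 ≤ h)
    (K δ : ℝ) (hK : 0 < K) (hδ : 0 < δ)
    (hmax : ∀ v : V, ((G.neighborSet v).ncard : ℝ) ≤ K * δ)
    (x y : V) (i j : ℕ) (hij : i + j < 2 * k)
    (hrich : Rich G k h K δ i j x y) :
    ManyDisjointPaths G (2 * k) x y h := by
  have hD : 0 ≤ K * δ := le_of_lt (mul_pos hK hδ)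
  suffices hmain : ∀ n, n ≤ h → ManyDisjointPaths G (2 * k) x y n from hmain h le_rfl
  intro n
  induction n with
  | zero =>
    intro _
    exact ⟨Fin.elim0, fun a => a.elim0, fun a => a.elim0, fun a => a.elim0⟩
  | succ n ih =>
    intro hn
    obtain ⟨Pold, hPold1, hPold2, hPold3⟩ := ih (by omega)
    exact Aux.extend_family hk hh hD hmax hij hrich hn Pold hPold1 hPold2 hPold3
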